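/- arXiv:2508.03200 — 5 statements merged into one kernel-verified Lean document; each statement's English description precedes it below -/
import Mathlib

section
/- Under the Hess–Sretensky conditions s₃=0, x₃=0, and A₂(A₃−A₁)x₂² = A₁(A₂−A₃)x₁², the function H = A₁ω₁x₁ + A₂ω₂x₂ + A₁x₁(s₂x₁−s₁x₂)/((A₃−A₁)x₂) satisfies along solutions of the Euler–Poisson equations of a heavy gyrostat: dH/dt = (ω₃(A₃−A₁)x₂/(A₁x₁))·H. In particular, if H = 0 at the initial instant, then H ≡ 0 for all time. -/
/-- Hess–Sretensky invariant relation for the heavy gyrostat. -/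
theorem hess_sretensky_invariant
    (A₁ A₂ A₃ x₁ x₂ x₃ s₁ s₂ s₃ M g : ℝ)
    (ω₁ ω₂ ω₃ γ₁ γ₂ γ₃ ω₁' ω₂' ω₃' : ℝ → ℝ)
    (hA₁ : A₁ ≠ 0) (hx₁ : x₁ ≠ 0) (hx₂ : x₂ ≠ 0) (hA₃₁ : A₃ ≠ A₁)
    (hs₃ : s₃ = 0) (hx₃ : x₃ = 0)
    (hHS : A₂ * (A₃ - A₁) * x₂ ^ 2 = A₁ * (A₂ - A₃) * x₁ ^ 2)
    (hω₁ : ∀ t, HasDerivAt ω₁ (ω₁' t) t)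
    (hω₂ : ∀ t, HasDerivAt ω₂ (ω₂' t) t)
    (hω₃ : ∀ t, HasDerivAt ω₃ (ω₃' t) t)
    (e₁ : ∀ t, A₁ * ω₁' t + (A₃ - A₂) * ω₂ t * ω₃ t + s₃ * ω₂ t - s₂ * ω₃ t
        = M * g * (x₃ * γ₂ t - x₂ * γ₃ t))
    (e₂ : ∀ t, A₂ * ω₂' t + (A₁ - A₃) * ω₁ t * ω₃ t + s₁ * ω₃ t - s₃ * ω₁ t
        = M * g * (x₁ * γ₃ t - x₃ * γ₁ t))
    (e₃ : ∀ t, A₃ * ω₃' t + (A₂ - A₁) * ω₁ t * ω₂ t + s₂ * ω₁ t - s₁ * ω₂ t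
        = M * g * (x₂ * γ₁ t - x₁ * γ₂ t))
    (hγ₁ : ∀ t, HasDerivAt γ₁ (ω₃ t * γ₂ t - ω₂ t * γ₃ t) t)
    (hγ₂ : ∀ t, HasDerivAt γ₂ (ω₁ t * γ₃ t - ω₃ t * γ₁ t) t)
    (hγ₃ : ∀ t, HasDerivAt γ₃ (ω₂ t * γ₁ t - ω₁ t * γ₂ t) t)
    (H : ℝ → ℝ)
    (hH : ∀ t, H t = A₁ * ω₁ t * x₁ + A₂ * ω₂ t * x₂
        + A₁ * x₁ * (s₂ * x₁ - s₁ * x₂) / ((A₃ - A₁) * x₂)) :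
    (∀ t, HasDerivAt H (ω₃ t * (A₃ - A₁) * x₂ / (A₁ * x₁) * H t) t)
    ∧ (H 0 = 0 → ∀ t, H t = 0) := by

  have hA31 : A₃ - A₁ ≠ 0 := sub_ne_zero.mpr hA₃₁
  -- H as explicit function
  have hHfun : H = fun t => A₁ * ω₁ t * x₁ + A₂ * ω₂ t * x₂
      + A₁ * x₁ * (s₂ * x₁ - s₁ * x₂) / ((A₃ - A₁) * x₂) := funext hH
  have key : ∀ t, HasDerivAt H (ω₃ t * (A₃ - A₁) * x₂ / (A₁ * x₁) * H t) t := by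
    intro t
    have hd : HasDerivAt H (A₁ * x₁ * ω₁' t + A₂ * x₂ * ω₂' t) t := by
      rw [hHfun]
      have h1 := ((hω₁ t).const_mul A₁).mul_const x₁
      have h2 := ((hω₂ t).const_mul A₂).mul_const x₂
      have := (h1.add h2).add_const (A₁ * x₁ * (s₂ * x₁ - s₁ * x₂) / ((A₃ - A₁) * x₂))
      exact this.congr_deriv (by ring)
    have heq : A₁ * x₁ * ω₁' t + A₂ * x₂ * ω₂' t
        = ω₃ t * (A₃ - A₁) * x₂ / (A₁ * x₁) * H t := by
      have h1 := e₁ t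
      have h2 := e₂ t
      rw [hs₃, hx₃] at h1 h2
      rw [hH t]
      field_simp
      linear_combination (A₁ * x₁ * x₁) * h1
        + (A₁ * x₁ * x₂) * h2
        - (ω₂ t * ω₃ t) * hHS
    exact heq ▸ hd
  refine ⟨key, fun h0 t => ?_⟩
  -- Gronwall-type argument via integrating factor
  set c : ℝ → ℝ := fun t => ω₃ t * (A₃ - A₁) * x₂ / (A₁ * x₁) with hc
  have hω₃c : Continuous ω₃ :=
    continuous_iff_continuousAt.mpr fun t => (hω₃ t).continuousAt
  have hccont : Continuous c :=
    (((hω₃c.mul continuous_const).mul continuous_const).div_const _)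
  set F : ℝ → ℝ := fun t => ∫ s in (0:ℝ)..t, c s with hF
  have hFd : ∀ t, HasDerivAt F (c t) t := fun t =>
    (hccont.integral_hasStrictDerivAt 0 t).hasDerivAt
  set G : ℝ → ℝ := fun t => H t * Real.exp (-(F t)) with hG
  have hGd : ∀ t, HasDerivAt G 0 t := by
    intro t
    have h1 : HasDerivAt (fun t => Real.exp (-(F t))) (Real.exp (-(F t)) * (-(c t))) t :=
      ((hFd t).neg).exp
    have := (key t).mul h1
    exact this.congr_deriv (by ring)
  have hGc : ∀ t, G t = G 0 := by
    intro t
    have : ∀ s, deriv G s = 0 := fun s => (hGd s).deriv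
    have hdg : Differentiable ℝ G := fun s => (hGd s).differentiableAt
    exact is_const_of_deriv_eq_zero hdg this t 0
  have := hGc t
  simp only [hG, h0, zero_mul] at this
  have hexp : Real.exp (-(F t)) ≠ 0 := Real.exp_ne_zero _
  exact (mul_eq_zero.mp this).resolve_right hexp
end

section
/- In the Yehia–Komarov case A₁ = A₂ = 2A₃, x₂ = x₃ = 0, s₁ = s₂ = 0, the function J = (ω₁²−ω₂²−(Mgx₁/A₃)γ₁)² + (2ω₁ω₂−(Mgx₁/A₃)γ₂)² + (2s₃/A₃)(ω₃−s₃/A₃)(ω₁²+ω₂²) − (4Mgx₁s₃/A₃²)γ₃ω₁ is a first integral of the Euler–Poisson equations of a heavy gyrostat. -/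
/-- The Yehia–Komarov first integral of the heavy gyrostat. -/
theorem yehia_komarov_first_integral
    (A₁ A₂ A₃ x₁ x₂ x₃ s₁ s₂ s₃ M g : ℝ)
    (hA₁ : A₁ = 2 * A₃) (hA₂ : A₂ = 2 * A₃)
    (hx₂ : x₂ = 0) (hx₃ : x₃ = 0) (hs₁ : s₁ = 0) (hs₂ : s₂ = 0)
    (hA₃ : A₃ ≠ 0)
    (ω₁ ω₂ ω₃ γ₁ γ₂ γ₃ ω₁' ω₂' ω₃' : ℝ → ℝ)
    (hω₁ : ∀ t, HasDerivAt ω₁ (ω₁' t) t)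
    (hω₂ : ∀ t, HasDerivAt ω₂ (ω₂' t) t)
    (hω₃ : ∀ t, HasDerivAt ω₃ (ω₃' t) t)
    (e₁ : ∀ t, A₁ * ω₁' t + (A₃ - A₂) * ω₂ t * ω₃ t + s₃ * ω₂ t - s₂ * ω₃ t
        = M * g * (x₃ * γ₂ t - x₂ * γ₃ t))
    (e₂ : ∀ t, A₂ * ω₂' t + (A₁ - A₃) * ω₁ t * ω₃ t + s₁ * ω₃ t - s₃ * ω₁ t
        = M * g * (x₁ * γ₃ t - x₃ * γ₁ t))
    (e₃ : ∀ t, A₃ * ω₃' t + (A₂ - A₁) * ω₁ t * ω₂ t + s₂ * ω₁ t - s₁ * ω₂ t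
        = M * g * (x₂ * γ₁ t - x₁ * γ₂ t))
    (hγ₁ : ∀ t, HasDerivAt γ₁ (ω₃ t * γ₂ t - ω₂ t * γ₃ t) t)
    (hγ₂ : ∀ t, HasDerivAt γ₂ (ω₁ t * γ₃ t - ω₃ t * γ₁ t) t)
    (hγ₃ : ∀ t, HasDerivAt γ₃ (ω₂ t * γ₁ t - ω₁ t * γ₂ t) t) :
    ∀ t, HasDerivAt (fun t =>
      (ω₁ t ^ 2 - ω₂ t ^ 2 - (M * g * x₁ / A₃) * γ₁ t) ^ 2
      + (2 * ω₁ t * ω₂ t - (M * g * x₁ / A₃) * γ₂ t) ^ 2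
      + (2 * s₃ / A₃) * (ω₃ t - s₃ / A₃) * (ω₁ t ^ 2 + ω₂ t ^ 2)
      - (4 * M * g * x₁ * s₃ / A₃ ^ 2) * γ₃ t * ω₁ t) 0 t := by
  subst hA₁ hA₂ hx₂ hx₃ hs₁ hs₂
  intro t
  have h1 := e₁ t
  have h2 := e₂ t
  have h3 := e₃ t
  have w1 : ω₁' t = (ω₂ t * ω₃ t) / 2 - s₃ * ω₂ t / (2 * A₃) := by
    field_simp at h1 ⊢
    linarith
  have w2 : ω₂' t = (M * g * x₁ * γ₃ t + s₃ * ω₁ t) / (2 * A₃)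
      - (ω₁ t * ω₃ t) / 2 := by
    field_simp at h2 ⊢
    linarith
  have w3 : ω₃' t = -(M * g * x₁ * γ₂ t) / A₃ := by
    field_simp at h3 ⊢
    linarith
  have key : HasDerivAt (fun t =>
      (ω₁ t ^ 2 - ω₂ t ^ 2 - (M * g * x₁ / A₃) * γ₁ t) ^ 2
      + (2 * ω₁ t * ω₂ t - (M * g * x₁ / A₃) * γ₂ t) ^ 2
      + (2 * s₃ / A₃) * (ω₃ t - s₃ / A₃) * (ω₁ t ^ 2 + ω₂ t ^ 2)
      - (4 * M * g * x₁ * s₃ / A₃ ^ 2) * γ₃ t * ω₁ t)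
      (2 * (ω₁ t ^ 2 - ω₂ t ^ 2 - (M * g * x₁ / A₃) * γ₁ t)
          * (2 * ω₁ t * ω₁' t - 2 * ω₂ t * ω₂' t
            - (M * g * x₁ / A₃) * (ω₃ t * γ₂ t - ω₂ t * γ₃ t))
        + 2 * (2 * ω₁ t * ω₂ t - (M * g * x₁ / A₃) * γ₂ t)
          * (2 * ω₁' t * ω₂ t + 2 * ω₁ t * ω₂' t
            - (M * g * x₁ / A₃) * (ω₁ t * γ₃ t - ω₃ t * γ₁ t))
        + (2 * s₃ / A₃) * (ω₃' t * (ω₁ t ^ 2 + ω₂ t ^ 2)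
            + (ω₃ t - s₃ / A₃) * (2 * ω₁ t * ω₁' t + 2 * ω₂ t * ω₂' t))
        - (4 * M * g * x₁ * s₃ / A₃ ^ 2)
          * ((ω₂ t * γ₁ t - ω₁ t * γ₂ t) * ω₁ t + γ₃ t * ω₁' t)) t := by
    have d1 : HasDerivAt (fun t => ω₁ t ^ 2 - ω₂ t ^ 2 - (M * g * x₁ / A₃) * γ₁ t)
        (2 * ω₁ t * ω₁' t - 2 * ω₂ t * ω₂' t
          - (M * g * x₁ / A₃) * (ω₃ t * γ₂ t - ω₂ t * γ₃ t)) t := by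
      have := (((hω₁ t).pow 2).sub ((hω₂ t).pow 2)).sub ((hγ₁ t).const_mul (M * g * x₁ / A₃))
      exact this.congr_deriv (by ring)
    have d2 : HasDerivAt (fun t => 2 * ω₁ t * ω₂ t - (M * g * x₁ / A₃) * γ₂ t)
        (2 * ω₁' t * ω₂ t + 2 * ω₁ t * ω₂' t
          - (M * g * x₁ / A₃) * (ω₁ t * γ₃ t - ω₃ t * γ₁ t)) t := by
      have := (((hω₁ t).const_mul 2).mul (hω₂ t)).sub ((hγ₂ t).const_mul (M * g * x₁ / A₃))
      exact this.congr_deriv (by ring)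
    have d3 : HasDerivAt (fun t => (2 * s₃ / A₃) * (ω₃ t - s₃ / A₃) * (ω₁ t ^ 2 + ω₂ t ^ 2))
        ((2 * s₃ / A₃) * (ω₃' t * (ω₁ t ^ 2 + ω₂ t ^ 2)
          + (ω₃ t - s₃ / A₃) * (2 * ω₁ t * ω₁' t + 2 * ω₂ t * ω₂' t))) t := by
      have := ((((hω₃ t).sub_const (s₃ / A₃)).const_mul (2 * s₃ / A₃)).mul
        (((hω₁ t).pow 2).add ((hω₂ t).pow 2)))
      exact this.congr_deriv (by simp only [Pi.add_apply, Pi.pow_apply]; ring)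
    have d4 : HasDerivAt (fun t => (4 * M * g * x₁ * s₃ / A₃ ^ 2) * γ₃ t * ω₁ t)
        ((4 * M * g * x₁ * s₃ / A₃ ^ 2)
          * ((ω₂ t * γ₁ t - ω₁ t * γ₂ t) * ω₁ t + γ₃ t * ω₁' t)) t := by
      have := ((hγ₃ t).const_mul (4 * M * g * x₁ * s₃ / A₃ ^ 2)).mul (hω₁ t)
      exact this.congr_deriv (by ring)
    have := (((d1.pow 2).add (d2.pow 2)).add d3).sub d4
    exact this.congr_deriv (by push_cast; ring)
  convert key using 1
  rw [w1, w2, w3]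
  field_simp
  ring
end

section
/- Under the Kosov conditions A₂(A₃−A₁)x₂² = A₁(A₂−A₃)x₁², x₃ = 0, s₃ = 0, with gyroscopic matrix entries g₁₁ = λx₁², g₁₂ = λx₁x₂, g₂₂ = λx₂², the function H = A₁ω₁x₁ + A₂ω₂x₂ + A₁x₁(s₂x₁−s₁x₂)/((A₃−A₁)x₂) satisfies along solutions of the gyrostat equations with gyroscopic forces: dH/dt = (ω₃(A₂−A₃)x₁/(A₂x₂))·H; in particular H = 0 is an invariant manifold. -/
/-- Hess–Sretensky invariant relation for a gyrostat with gyroscopic forces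
(Kosov conditions). -/
theorem hess_sretensky_gyroscopic_invariant
    (A₁ A₂ A₃ x₁ x₂ x₃ s₁ s₂ s₃ M g lam g₁₁ g₁₂ g₂₂ : ℝ)
    (hA : A₂ > A₃ ∧ A₃ > A₁) (hx₁ : x₁ ≠ 0) (hx₂ : x₂ ≠ 0)
    (hs₃ : s₃ = 0) (hx₃ : x₃ = 0)
    (hHS : A₂ * (A₃ - A₁) * x₂ ^ 2 = A₁ * (A₂ - A₃) * x₁ ^ 2)
    (hg₁₁ : g₁₁ = lam * x₁ ^ 2) (hg₁₂ : g₁₂ = lam * x₁ * x₂) (hg₂₂ : g₂₂ = lam * x₂ ^ 2)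
    (ω₁ ω₂ ω₃ γ₁ γ₂ γ₃ ω₁' ω₂' ω₃' : ℝ → ℝ)
    (hω₁ : ∀ t, HasDerivAt ω₁ (ω₁' t) t)
    (hω₂ : ∀ t, HasDerivAt ω₂ (ω₂' t) t)
    (hω₃ : ∀ t, HasDerivAt ω₃ (ω₃' t) t)
    (e₁ : ∀ t, A₁ * ω₁' t + (A₃ - A₂) * ω₂ t * ω₃ t - s₂ * ω₃ t
        = -(M * g * x₂ * γ₃ t) + lam * x₂ * ω₃ t * (γ₁ t * x₁ + γ₂ t * x₂))
    (e₂ : ∀ t, A₂ * ω₂' t + (A₁ - A₃) * ω₁ t * ω₃ t + s₁ * ω₃ t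
        = M * g * x₁ * γ₃ t - lam * x₁ * ω₃ t * (γ₁ t * x₁ + γ₂ t * x₂))
    (e₃ : ∀ t, A₃ * ω₃' t + (A₂ - A₁) * ω₁ t * ω₂ t + s₂ * ω₁ t - s₁ * ω₂ t
        = M * g * (x₂ * γ₁ t - x₁ * γ₂ t)
          + lam * (x₁ * ω₂ t - x₂ * ω₁ t) * (γ₁ t * x₁ + γ₂ t * x₂))
    (hγ₁ : ∀ t, HasDerivAt γ₁ (ω₃ t * γ₂ t - ω₂ t * γ₃ t) t)
    (hγ₂ : ∀ t, HasDerivAt γ₂ (ω₁ t * γ₃ t - ω₃ t * γ₁ t) t)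
    (hγ₃ : ∀ t, HasDerivAt γ₃ (ω₂ t * γ₁ t - ω₁ t * γ₂ t) t)
    (H : ℝ → ℝ)
    (hH : ∀ t, H t = A₁ * ω₁ t * x₁ + A₂ * ω₂ t * x₂
        + A₁ * x₁ * (s₂ * x₁ - s₁ * x₂) / ((A₃ - A₁) * x₂)) :
    (∀ t, HasDerivAt H (ω₃ t * (A₂ - A₃) * x₁ / (A₂ * x₂) * H t) t)
    ∧ (H 0 = 0 → ∀ t, H t = 0) := by
  obtain ⟨hA23, hA31⟩ := hA
  have hA31' : A₃ - A₁ ≠ 0 := by linarith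
  have hA23' : A₂ - A₃ ≠ 0 := by linarith
  have hA2 : A₂ ≠ 0 := by
    intro h
    have h3 : A₃ < 0 := by linarith
    have h1 : A₁ < 0 := by linarith
    rw [h] at hHS
    have hx : 0 < x₁ ^ 2 := by positivity
    nlinarith [mul_pos (mul_pos (neg_pos.2 h1) (neg_pos.2 h3)) hx]
  have hHfun : H = fun t => A₁ * ω₁ t * x₁ + A₂ * ω₂ t * x₂
      + A₁ * x₁ * (s₂ * x₁ - s₁ * x₂) / ((A₃ - A₁) * x₂) := funext hH
  have hder : ∀ t, HasDerivAt H (ω₃ t * (A₂ - A₃) * x₁ / (A₂ * x₂) * H t) t := by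
    intro t
    have hd : HasDerivAt H (A₁ * ω₁' t * x₁ + A₂ * ω₂' t * x₂) t := by
      rw [hHfun]
      exact (((hω₁ t).const_mul A₁).mul_const x₁ |>.add
        (((hω₂ t).const_mul A₂).mul_const x₂)).add_const _
    convert hd using 1
    have key : A₁ * ω₁' t * x₁ + A₂ * ω₂' t * x₂
        = ω₃ t * ((A₂ - A₃) * x₁ * ω₂ t + (A₃ - A₁) * x₂ * ω₁ t + s₂ * x₁ - s₁ * x₂) := by
      linear_combination x₁ * e₁ t + x₂ * e₂ t
    rw [key, hH t]
    field_simp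
    linear_combination (-(ω₃ t * (ω₁ t * (A₃ - A₁) * x₂ + s₂ * x₁ - s₁ * x₂))) * hHS
  refine ⟨hder, ?_⟩
  intro h0 t
  -- Gronwall-type argument: H t * exp(-k * ∫ ω₃) is constant
  set k : ℝ := (A₂ - A₃) * x₁ / (A₂ * x₂) with hk
  have hcω₃ : Continuous ω₃ :=
    continuous_iff_continuousAt.2 fun t => (hω₃ t).continuousAt
  set C : ℝ → ℝ := fun t => ∫ s in (0:ℝ)..t, ω₃ s with hC
  have hCder : ∀ t, HasDerivAt C (ω₃ t) t := by
    intro t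
    simpa using (hcω₃.integral_hasStrictDerivAt 0 t).hasDerivAt
  set G : ℝ → ℝ := fun t => H t * Real.exp (-(k * C t)) with hG
  have hGder : ∀ t, HasDerivAt G 0 t := by
    intro t
    have h1 : HasDerivAt G _ t := (hder t).mul (((((hCder t).const_mul k).neg).exp))
    convert h1 using 1
    simp only [Pi.neg_apply]
    rw [hk]
    ring
  have hGconst : ∀ u, G u = G 0 :=
    fun u => is_const_of_deriv_eq_zero (fun v => (hGder v).differentiableAt)
      (fun v => (hGder v).deriv) u 0
  have : G t = 0 := by
    rw [hGconst t, hG]; simp [h0]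
  have hexp : Real.exp (-(k * C t)) ≠ 0 := Real.exp_ne_zero _
  have := mul_eq_zero.1 this
  tauto
end

section
/- For the gyrostat with gyroscopic forces satisfying g₁₁ = λx₁², g₁₂ = λx₁x₂, g₂₂ = λx₂², x₃ = 0, s₃ = 0, the function K = (A₁ω₁+s₁)γ₁ + (A₂ω₂+s₂)γ₂ + A₃ω₃γ₃ + (λ/2)(x₁γ₁+x₂γ₂)² is a first integral of the equations of motion. -/
/-- The modified area function is a first integral of the gyrostat equations
with gyroscopic forces. -/
theorem area_first_integral_gyroscopic
    (A₁ A₂ A₃ x₁ x₂ x₃ s₁ s₂ s₃ M g lam g₁₁ g₁₂ g₂₂ : ℝ)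
    (hs₃ : s₃ = 0) (hx₃ : x₃ = 0)
    (hg₁₁ : g₁₁ = lam * x₁ ^ 2) (hg₁₂ : g₁₂ = lam * x₁ * x₂) (hg₂₂ : g₂₂ = lam * x₂ ^ 2)
    (ω₁ ω₂ ω₃ γ₁ γ₂ γ₃ ω₁' ω₂' ω₃' : ℝ → ℝ)
    (hω₁ : ∀ t, HasDerivAt ω₁ (ω₁' t) t)
    (hω₂ : ∀ t, HasDerivAt ω₂ (ω₂' t) t)
    (hω₃ : ∀ t, HasDerivAt ω₃ (ω₃' t) t)
    (e₁ : ∀ t, A₁ * ω₁' t + (A₃ - A₂) * ω₂ t * ω₃ t - s₂ * ω₃ t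
        = -(M * g * x₂ * γ₃ t) + lam * x₂ * ω₃ t * (γ₁ t * x₁ + γ₂ t * x₂))
    (e₂ : ∀ t, A₂ * ω₂' t + (A₁ - A₃) * ω₁ t * ω₃ t + s₁ * ω₃ t
        = M * g * x₁ * γ₃ t - lam * x₁ * ω₃ t * (γ₁ t * x₁ + γ₂ t * x₂))
    (e₃ : ∀ t, A₃ * ω₃' t + (A₂ - A₁) * ω₁ t * ω₂ t + s₂ * ω₁ t - s₁ * ω₂ t
        = M * g * (x₂ * γ₁ t - x₁ * γ₂ t)
          + lam * (x₁ * ω₂ t - x₂ * ω₁ t) * (γ₁ t * x₁ + γ₂ t * x₂))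
    (hγ₁ : ∀ t, HasDerivAt γ₁ (ω₃ t * γ₂ t - ω₂ t * γ₃ t) t)
    (hγ₂ : ∀ t, HasDerivAt γ₂ (ω₁ t * γ₃ t - ω₃ t * γ₁ t) t)
    (hγ₃ : ∀ t, HasDerivAt γ₃ (ω₂ t * γ₁ t - ω₁ t * γ₂ t) t) :
    ∀ t, HasDerivAt (fun t =>
      (A₁ * ω₁ t + s₁) * γ₁ t + (A₂ * ω₂ t + s₂) * γ₂ t + A₃ * ω₃ t * γ₃ t
      + lam / 2 * (x₁ * γ₁ t + x₂ * γ₂ t) ^ 2) 0 t := by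
  intro t
  have h := ((((((hω₁ t).const_mul A₁).add_const s₁).mul (hγ₁ t)).add
        ((((hω₂ t).const_mul A₂).add_const s₂).mul (hγ₂ t))).add
        (((hω₃ t).const_mul A₃).mul (hγ₃ t))).add
        ((((((hγ₁ t).const_mul x₁).add ((hγ₂ t).const_mul x₂)).pow 2)).const_mul (lam / 2))
  refine h.congr_deriv (Eq.symm ?_)
  have h1 := e₁ t; have h2 := e₂ t; have h3 := e₃ t
  simp only [Pi.add_apply]
  ring_nf
  ring_nf at h1 h2 h3
  linear_combination (-(γ₁ t)) * h1 - γ₂ t * h2 - γ₃ t * h3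
end

section
/- For the dimensionless system with gyroscopic term dy/dτ = d₁yz + (A−B)z − Qν₁z + ν₃, dz/dτ = −d₁y² − (A−B)y + Qν₁y − ν₂, dν₁/dτ = zν₂ − yν₃, dν₂/dτ = d₁yν₃ − zν₁ + Aν₃, dν₃/dτ = −d₁yν₂ + yν₁ − Aν₂, each of H₁ = (y²+z²)/2 + ν₁, H₂ = yν₂ + zν₃ + Bν₁ + (Q/2)ν₁², H₃ = ν₁² + ν₂² + ν₃² is constant along solutions. -/
lemma const_of_hasDerivAt_zero (f : ℝ → ℝ) (h : ∀ τ, HasDerivAt f 0 τ) (τ : ℝ) :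
    f τ = f 0 :=
  is_const_of_deriv_eq_zero (fun x => (h x).differentiableAt) (fun x => (h x).deriv) τ 0

/-- First integrals of the dimensionless Hess–Sretensky system with gyroscopic term. -/
theorem reduced_gyroscopic_integrals
    (d₁ A B Q : ℝ) (y z ν₁ ν₂ ν₃ : ℝ → ℝ)
    (hy : ∀ τ, HasDerivAt y (d₁ * y τ * z τ + (A - B) * z τ - Q * ν₁ τ * z τ + ν₃ τ) τ)
    (hz : ∀ τ, HasDerivAt z (-(d₁ * y τ ^ 2) - (A - B) * y τ + Q * ν₁ τ * y τ - ν₂ τ) τ)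
    (h1 : ∀ τ, HasDerivAt ν₁ (z τ * ν₂ τ - y τ * ν₃ τ) τ)
    (h2 : ∀ τ, HasDerivAt ν₂ (d₁ * y τ * ν₃ τ - z τ * ν₁ τ + A * ν₃ τ) τ)
    (h3 : ∀ τ, HasDerivAt ν₃ (-(d₁ * y τ * ν₂ τ) + y τ * ν₁ τ - A * ν₂ τ) τ) :
    (∀ τ, (y τ ^ 2 + z τ ^ 2) / 2 + ν₁ τ = (y 0 ^ 2 + z 0 ^ 2) / 2 + ν₁ 0)
    ∧ (∀ τ, y τ * ν₂ τ + z τ * ν₃ τ + B * ν₁ τ + Q / 2 * ν₁ τ ^ 2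
        = y 0 * ν₂ 0 + z 0 * ν₃ 0 + B * ν₁ 0 + Q / 2 * ν₁ 0 ^ 2)
    ∧ (∀ τ, ν₁ τ ^ 2 + ν₂ τ ^ 2 + ν₃ τ ^ 2 = ν₁ 0 ^ 2 + ν₂ 0 ^ 2 + ν₃ 0 ^ 2) := by
  refine ⟨?_, ?_, ?_⟩
  · intro τ
    apply const_of_hasDerivAt_zero (fun t => (y t ^ 2 + z t ^ 2) / 2 + ν₁ t)
    intro t
    have := ((((hy t).pow 2).add ((hz t).pow 2)).div_const 2).add (h1 t)
    refine this.congr_deriv ?_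
    ring
  · intro τ
    apply const_of_hasDerivAt_zero
      (fun t => y t * ν₂ t + z t * ν₃ t + B * ν₁ t + Q / 2 * ν₁ t ^ 2)
    intro t
    have := ((((hy t).mul (h2 t)).add ((hz t).mul (h3 t))).add
      ((h1 t).const_mul B)).add (((h1 t).pow 2).const_mul (Q / 2))
    refine this.congr_deriv ?_
    ring
  · intro τ
    apply const_of_hasDerivAt_zero (fun t => ν₁ t ^ 2 + ν₂ t ^ 2 + ν₃ t ^ 2)
    intro t
    have := (((h1 t).pow 2).add ((h2 t).pow 2)).add ((h3 t).pow 2)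
    refine this.congr_deriv ?_
    ring
end
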